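/- There exist α > 0 and C > 0 with the following properties. Let ψ : (0,∞) → ℝ be C¹ with finite energy E(ψ,0), and let r₀ ∈ (0,∞). (a) If lim_{r→0} ψ(r) = 0 and E₀^{r₀}(ψ,0) < α, then ∫₀^{r₀} (ψ'(r)² + ψ(r)²/r²) r dr ≤ C · E₀^{r₀}(ψ,0). (b) If lim_{r→∞} ψ(r) = π and E_{r₀}^∞(ψ,0) < α, then ∫_{r₀}^∞ (ψ'(r)² + (ψ(r)−π)²/r²) r dr ≤ C · E_{r₀}^∞(ψ,0). -/

import Mathlib

open MeasureTheory Filter Set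

noncomputable section

section Helpers
open intervalIntegral

noncomputable def GG (x : ℝ) : ℝ := ∫ t in (0:ℝ)..x, |Real.sin t|

lemma contAbsSin : Continuous fun t : ℝ => |Real.sin t| := Real.continuous_sin.abs

lemma GG_hasDerivAt (x : ℝ) : HasDerivAt GG |Real.sin x| x :=
  (contAbsSin.integral_hasStrictDerivAt 0 x).hasDerivAt

lemma GG_continuous : Continuous GG :=
  continuous_iff_continuousAt.2 fun x => (GG_hasDerivAt x).continuousAt

lemma sq_le_sq_sin {x : ℝ} (hx : |x| ≤ Real.pi / 2) :
    x ^ 2 ≤ Real.pi ^ 2 / 4 * Real.sin x ^ 2 := by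
  have h := Real.mul_abs_le_abs_sin hx
  have hpi := Real.pi_pos
  have h2 : 2 * |x| ≤ Real.pi * |Real.sin x| := by
    rw [div_mul_eq_mul_div, div_le_iff₀ hpi] at h; linarith
  nlinarith [mul_self_le_mul_self (by positivity : (0:ℝ) ≤ 2 * |x|) h2,
    sq_abs x, sq_abs (Real.sin x), abs_nonneg x, abs_nonneg (Real.sin x)]

/-- Key FTC estimate. -/
lemma key (ψ : ℝ → ℝ) (hψ : ContDiffOn ℝ 1 ψ (Ioi 0)) {s r : ℝ} (hs : 0 < s) (hsr : s ≤ r) :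
    |GG (ψ r) - GG (ψ s)| ≤
      (1/2) * ∫ t in Ioo s r, (deriv ψ t ^ 2 + Real.sin (ψ t) ^ 2 / t ^ 2) * t := by
  have hψc : ContinuousOn ψ (Ioi 0) := hψ.continuousOn
  have hdc : ContinuousOn (deriv ψ) (Ioi 0) :=
    hψ.continuousOn_deriv_of_isOpen isOpen_Ioi le_rfl
  have hsub : Icc s r ⊆ Ioi 0 := fun t ht => lt_of_lt_of_le hs ht.1
  have hder : ∀ t ∈ uIcc s r, HasDerivAt (fun u => GG (ψ u))
      (|Real.sin (ψ t)| * deriv ψ t) t := by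
    rw [uIcc_of_le hsr]
    intro t ht
    have htpos : (0:ℝ) < t := hsub ht
    have hψd : HasDerivAt ψ (deriv ψ t) t :=
      ((hψ.differentiableOn one_ne_zero).differentiableAt (Ioi_mem_nhds htpos)).hasDerivAt
    exact (GG_hasDerivAt (ψ t)).comp t hψd
  have hcont' : ContinuousOn (fun t => |Real.sin (ψ t)| * deriv ψ t) (Icc s r) :=
    ((Real.continuous_sin.comp_continuousOn (hψc.mono hsub)).abs).mul (hdc.mono hsub)
  have hii : IntervalIntegrable (fun t => |Real.sin (ψ t)| * deriv ψ t) volume s r :=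
    (hcont'.mono (by rw [uIcc_of_le hsr])).intervalIntegrable
  have hfc : ContinuousOn (fun t => (deriv ψ t ^ 2 + Real.sin (ψ t) ^ 2 / t ^ 2) * t)
      (Icc s r) := by
    refine (((hdc.mono hsub).pow 2).add (((Real.continuous_sin.comp_continuousOn
      (hψc.mono hsub)).pow 2).div ((continuous_pow 2).continuousOn)
      (fun t ht => pow_ne_zero 2 (ne_of_gt (hsub ht))))).mul continuousOn_id
  have hfii : IntervalIntegrable
      (fun t => (deriv ψ t ^ 2 + Real.sin (ψ t) ^ 2 / t ^ 2) * t) volume s r :=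
    (hfc.mono (by rw [uIcc_of_le hsr])).intervalIntegrable
  have heq : (∫ t in s..r, |Real.sin (ψ t)| * deriv ψ t) = GG (ψ r) - GG (ψ s) :=
    integral_eq_sub_of_hasDerivAt hder hii
  have hpt : ∀ t ∈ Icc s r, |(|Real.sin (ψ t)| * deriv ψ t)| ≤
      1/2 * ((deriv ψ t ^ 2 + Real.sin (ψ t) ^ 2 / t ^ 2) * t) := by
    intro t ht
    have ht0 : (0:ℝ) < t := hsub ht
    set a := deriv ψ t
    set b := Real.sin (ψ t)
    have hb : |b| * |a| * (2 * t) ≤ a ^ 2 * t ^ 2 + b ^ 2 := by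
      nlinarith [sq_nonneg (|a| * t - |b|), sq_abs a, sq_abs b, abs_nonneg a,
        abs_nonneg b, ht0.le]
    calc |(|b| * a)| = |b| * |a| := by rw [abs_mul, abs_abs]
      _ ≤ (a ^ 2 * t ^ 2 + b ^ 2) / (2 * t) := by
          rw [le_div_iff₀ (by linarith)]; linarith
      _ = 1/2 * ((a ^ 2 + b ^ 2 / t ^ 2) * t) := by field_simp
  calc |GG (ψ r) - GG (ψ s)| = |∫ t in s..r, |Real.sin (ψ t)| * deriv ψ t| := by
        rw [heq]
    _ ≤ ∫ t in s..r, |(|Real.sin (ψ t)| * deriv ψ t)| := by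
        simpa only [Real.norm_eq_abs] using
          intervalIntegral.norm_integral_le_integral_norm
            (f := fun t => |Real.sin (ψ t)| * deriv ψ t) (μ := volume) hsr
    _ ≤ ∫ t in s..r, 1/2 * ((deriv ψ t ^ 2 + Real.sin (ψ t) ^ 2 / t ^ 2) * t) := by
        refine intervalIntegral.integral_mono_on hsr hii.abs
          (hfii.const_mul (1/2)) hpt
    _ = 1/2 * ∫ t in s..r, (deriv ψ t ^ 2 + Real.sin (ψ t) ^ 2 / t ^ 2) * t :=
        intervalIntegral.integral_const_mul _ _
    _ = 1/2 * ∫ t in Ioo s r, (deriv ψ t ^ 2 + Real.sin (ψ t) ^ 2 / t ^ 2) * t := by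
        rw [intervalIntegral.integral_of_le hsr, integral_Ioc_eq_integral_Ioo]

lemma conclude {f g : ℝ → ℝ} {S : Set ℝ} (hS : MeasurableSet S)
    (hfi : IntegrableOn f S) (hg : AEStronglyMeasurable g (volume.restrict S))
    (hgnn : ∀ r ∈ S, 0 ≤ g r) (hle : ∀ r ∈ S, g r ≤ Real.pi ^ 2 / 4 * f r) :
    IntegrableOn g S ∧ (∫ r in S, g r) ≤ Real.pi ^ 2 / 4 * ∫ r in S, f r := by
  have hCf : IntegrableOn (fun r => Real.pi ^ 2 / 4 * f r) S := hfi.const_mul _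
  have hgi : IntegrableOn g S := by
    refine hCf.mono' hg ?_
    filter_upwards [ae_restrict_mem hS] with r hr
    rw [Real.norm_eq_abs, abs_of_nonneg (hgnn r hr)]
    exact hle r hr
  refine ⟨hgi, ?_⟩
  calc (∫ r in S, g r) ≤ ∫ r in S, Real.pi ^ 2 / 4 * f r :=
        setIntegral_mono_on hgi hCf hS hle
    _ = _ := MeasureTheory.integral_const_mul _ _

lemma GG_sub (x y : ℝ) : GG y - GG x = ∫ t in x..y, |Real.sin t| := by
  have h := integral_add_adjacent_intervals (μ := volume) (a := 0) (b := x) (c := y)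
    (contAbsSin.intervalIntegrable 0 x) (contAbsSin.intervalIntegrable x y)
  simp only [GG]; linarith

lemma GG_mono : Monotone GG := by
  intro x y hxy
  have h := GG_sub x y
  have h2 : 0 ≤ ∫ t in x..y, |Real.sin t| :=
    intervalIntegral.integral_nonneg hxy fun t _ => abs_nonneg _
  linarith

lemma GG_zero : GG 0 = 0 := by simp [GG]

lemma GG_pi_div_two : GG (Real.pi / 2) = 1 := by
  rw [GG, intervalIntegral.integral_congr (g := Real.sin) (fun t ht => ?_),
    integral_sin]
  · simp
  · rw [uIcc_of_le (by positivity)] at ht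
    exact abs_of_nonneg (Real.sin_nonneg_of_nonneg_of_le_pi ht.1
      (ht.2.trans (by linarith [Real.pi_pos])))

lemma GG_pi : GG Real.pi = 2 := by
  rw [GG, intervalIntegral.integral_congr (g := Real.sin) (fun t ht => ?_), integral_sin]
  · simp [Real.cos_pi]; norm_num
  · rw [uIcc_of_le Real.pi_pos.le] at ht
    exact abs_of_nonneg (Real.sin_nonneg_of_nonneg_of_le_pi ht.1 ht.2)

lemma GG_neg (x : ℝ) : GG (-x) = -GG x := by
  have h : GG (-x) - GG 0 = ∫ t in (0:ℝ)..(-x), |Real.sin t| := GG_sub 0 (-x)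
  rw [GG_zero, sub_zero] at h
  have h2 : (∫ t in (-x)..(0:ℝ), |Real.sin t|) = GG x := by
    have := intervalIntegral.integral_comp_neg (a := (0:ℝ)) (b := x)
      (fun t => |Real.sin t|)
    simp only [Real.sin_neg, abs_neg, neg_zero] at this
    rw [← this]; rfl
  rw [h, intervalIntegral.integral_symm, h2]

lemma GG_three_pi_div_two : GG (3 * Real.pi / 2) = 3 := by
  have h := GG_sub Real.pi (3 * Real.pi / 2)
  have : (∫ t in Real.pi..(3 * Real.pi / 2), |Real.sin t|) = 1 := by
    rw [intervalIntegral.integral_congr (g := fun t => -Real.sin t) (fun t ht => ?_)]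
    · rw [intervalIntegral.integral_neg, integral_sin]
      simp [Real.cos_pi]
      rw [show 3 * Real.pi / 2 = Real.pi + Real.pi/2 by ring, Real.cos_add]
      simp
    · rw [uIcc_of_le (by linarith [Real.pi_pos])] at ht
      have hnn : 0 ≤ Real.sin (t - Real.pi) :=
        Real.sin_nonneg_of_nonneg_of_le_pi (by linarith [ht.1])
          (by linarith [ht.2, Real.pi_pos])
      rw [Real.sin_sub_pi] at hnn
      rw [abs_of_nonpos (by linarith)]
  rw [GG_pi] at h; linarith


end Helpers

/-- Coercivity of the energy near the endpoints: there are `α, C > 0`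
such that for every finite-energy `C¹` map `ψ` and every `r₀ > 0`:
(a) if `ψ(0⁺) = 0` and `E₀^{r₀}(ψ,0) < α` then `‖ψ‖²_{H(r ≤ r₀)} ≤ C E₀^{r₀}(ψ,0)`;
(b) if `ψ(∞) = π` and `E_{r₀}^∞(ψ,0) < α` then `‖ψ − π‖²_{H(r ≥ r₀)} ≤ C E_{r₀}^∞(ψ,0)`. -/
theorem coercivity_near_endpoints :
    ∃ α C : ℝ, 0 < α ∧ 0 < C ∧
      ∀ ψ : ℝ → ℝ, ContDiffOn ℝ 1 ψ (Set.Ioi 0) →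
        IntegrableOn (fun r => (deriv ψ r ^ 2 + Real.sin (ψ r) ^ 2 / r ^ 2) * r)
          (Set.Ioi 0) →
        ∀ r₀ : ℝ, 0 < r₀ →
          ((Tendsto ψ (nhdsWithin 0 (Set.Ioi 0)) (nhds 0) →
            (∫ r in Set.Ioo (0:ℝ) r₀, (deriv ψ r ^ 2 + Real.sin (ψ r) ^ 2 / r ^ 2) * r) < α →
            IntegrableOn (fun r => (deriv ψ r ^ 2 + ψ r ^ 2 / r ^ 2) * r) (Set.Ioo 0 r₀) ∧
            (∫ r in Set.Ioo (0:ℝ) r₀, (deriv ψ r ^ 2 + ψ r ^ 2 / r ^ 2) * r)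
              ≤ C * ∫ r in Set.Ioo (0:ℝ) r₀,
                  (deriv ψ r ^ 2 + Real.sin (ψ r) ^ 2 / r ^ 2) * r) ∧
          (Tendsto ψ atTop (nhds Real.pi) →
            (∫ r in Set.Ioi r₀, (deriv ψ r ^ 2 + Real.sin (ψ r) ^ 2 / r ^ 2) * r) < α →
            IntegrableOn (fun r => (deriv ψ r ^ 2 + (ψ r - Real.pi) ^ 2 / r ^ 2) * r)
              (Set.Ioi r₀) ∧
            (∫ r in Set.Ioi r₀, (deriv ψ r ^ 2 + (ψ r - Real.pi) ^ 2 / r ^ 2) * r)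
              ≤ C * ∫ r in Set.Ioi r₀,
                  (deriv ψ r ^ 2 + Real.sin (ψ r) ^ 2 / r ^ 2) * r)) := by
  refine ⟨2, Real.pi ^ 2 / 4, by norm_num, by positivity, ?_⟩
  intro ψ hψ hInt r₀ hr₀
  have hψc := hψ.continuousOn
  have hdc : ContinuousOn (deriv ψ) (Ioi 0) :=
    hψ.continuousOn_deriv_of_isOpen isOpen_Ioi le_rfl
  have hpi := Real.pi_pos
  have hpi4 : (1:ℝ) ≤ Real.pi ^ 2 / 4 := by nlinarith [Real.pi_gt_three]
  constructor
  · -- case (a)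
    intro h0 hE
    set E := ∫ r in Set.Ioo (0:ℝ) r₀, (deriv ψ r ^ 2 + Real.sin (ψ r) ^ 2 / r ^ 2) * r
      with hEdef
    have hfi0 : IntegrableOn (fun r => (deriv ψ r ^ 2 + Real.sin (ψ r) ^ 2 / r ^ 2) * r)
        (Ioo 0 r₀) := hInt.mono_set Ioo_subset_Ioi_self
    have hfnn0 : 0 ≤ᵐ[volume.restrict (Ioo (0:ℝ) r₀)]
        fun r => (deriv ψ r ^ 2 + Real.sin (ψ r) ^ 2 / r ^ 2) * r := by
      filter_upwards [ae_restrict_mem measurableSet_Ioo] with r hr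
      have hr0 : (0:ℝ) < r := hr.1
      positivity
    have hbound : ∀ r ∈ Ioo (0:ℝ) r₀, |GG (ψ r)| ≤ 1/2 * E := by
      intro r hr
      have hev : ∀ s ∈ Ioo (0:ℝ) r, |GG (ψ r) - GG (ψ s)| ≤ 1/2 * E := by
        intro s hs
        refine (key ψ hψ hs.1 hs.2.le).trans ?_
        have hsub2 : Ioo s r ⊆ Ioo (0:ℝ) r₀ := Ioo_subset_Ioo hs.1.le hr.2.le
        have hmono := setIntegral_mono_set hfi0 hfnn0 hsub2.eventuallyLE
        linarith
      have hlim : Tendsto (fun s => |GG (ψ r) - GG (ψ s)|) (nhdsWithin 0 (Ioi 0))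
          (nhds |GG (ψ r) - GG 0|) :=
        (tendsto_const_nhds.sub ((GG_continuous.tendsto 0).comp h0)).abs
      rw [GG_zero, sub_zero] at hlim
      refine le_of_tendsto hlim ?_
      filter_upwards [Ioo_mem_nhdsGT hr.1] with s hs using hev s hs
    have hsmall : ∀ r ∈ Ioo (0:ℝ) r₀, |ψ r| ≤ Real.pi / 2 := by
      intro r hr
      by_contra hcon
      push_neg at hcon
      have hGb := hbound r hr
      have hE1 : 1/2 * E < 1 := by rw [hEdef]; linarith
      rcases le_or_gt 0 (ψ r) with h1 | h1
      · rw [abs_of_nonneg h1] at hcon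
        have h2 : (1:ℝ) ≤ GG (ψ r) := GG_pi_div_two ▸ GG_mono hcon.le
        have h3 := le_abs_self (GG (ψ r))
        linarith
      · rw [abs_of_neg h1] at hcon
        have h2 : GG (ψ r) ≤ GG (-(Real.pi/2)) := GG_mono (by linarith)
        rw [GG_neg, GG_pi_div_two] at h2
        have h3 := neg_le_abs (GG (ψ r))
        linarith
    have hsub : Ioo (0:ℝ) r₀ ⊆ Ioi 0 := Ioo_subset_Ioi_self
    have hgc : ContinuousOn (fun r => (deriv ψ r ^ 2 + ψ r ^ 2 / r ^ 2) * r) (Ioo 0 r₀) :=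
      (((hdc.mono hsub).pow 2).add (((hψc.mono hsub).pow 2).div
        ((continuous_pow 2).continuousOn)
        (fun r hr => pow_ne_zero 2 (ne_of_gt (hsub hr))))).mul continuousOn_id
    have hle : ∀ r ∈ Ioo (0:ℝ) r₀, (deriv ψ r ^ 2 + ψ r ^ 2 / r ^ 2) * r ≤
        Real.pi ^ 2 / 4 * ((deriv ψ r ^ 2 + Real.sin (ψ r) ^ 2 / r ^ 2) * r) := by
      intro r hr
      have hr0 : (0:ℝ) < r := hr.1
      have h1 : ψ r ^ 2 ≤ Real.pi ^ 2 / 4 * Real.sin (ψ r) ^ 2 := sq_le_sq_sin (hsmall r hr)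
      have hd : deriv ψ r ^ 2 ≤ Real.pi ^ 2 / 4 * deriv ψ r ^ 2 :=
        le_mul_of_one_le_left (sq_nonneg _) hpi4
      have h2 : ψ r ^ 2 / r ^ 2 ≤ (Real.pi ^ 2 / 4 * Real.sin (ψ r) ^ 2) / r ^ 2 :=
        (div_le_div_iff_of_pos_right (by positivity)).mpr h1
      calc (deriv ψ r ^ 2 + ψ r ^ 2 / r ^ 2) * r
          ≤ (Real.pi ^ 2 / 4 * deriv ψ r ^ 2
              + (Real.pi ^ 2 / 4 * Real.sin (ψ r) ^ 2) / r ^ 2) * r := by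
            apply mul_le_mul_of_nonneg_right _ hr0.le
            linarith
        _ = Real.pi ^ 2 / 4 * ((deriv ψ r ^ 2 + Real.sin (ψ r) ^ 2 / r ^ 2) * r) := by ring
    exact conclude measurableSet_Ioo hfi0 (hgc.aestronglyMeasurable measurableSet_Ioo)
      (fun r hr => by have hr0 : (0:ℝ) < r := hr.1; positivity) hle
  · -- case (b)
    intro hinf hE
    set E := ∫ r in Set.Ioi r₀, (deriv ψ r ^ 2 + Real.sin (ψ r) ^ 2 / r ^ 2) * r with hEdef
    have hfi0 : IntegrableOn (fun r => (deriv ψ r ^ 2 + Real.sin (ψ r) ^ 2 / r ^ 2) * r)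
        (Ioi r₀) := hInt.mono_set (Ioi_subset_Ioi hr₀.le)
    have hfnn0 : 0 ≤ᵐ[volume.restrict (Ioi r₀)]
        fun r => (deriv ψ r ^ 2 + Real.sin (ψ r) ^ 2 / r ^ 2) * r := by
      filter_upwards [ae_restrict_mem measurableSet_Ioi] with r hr
      have hr0 : (0:ℝ) < r := lt_trans hr₀ hr
      positivity
    have hbound : ∀ r ∈ Ioi r₀, |GG (ψ r) - 2| ≤ 1/2 * E := by
      intro r hr
      have hr0 : (0:ℝ) < r := lt_trans hr₀ hr
      have hev : ∀ s ∈ Ioi r, |GG (ψ s) - GG (ψ r)| ≤ 1/2 * E := by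
        intro s hs
        refine (key ψ hψ hr0 (le_of_lt hs)).trans ?_
        have hsub2 : Ioo r s ⊆ Ioi r₀ := fun t ht => lt_trans hr ht.1
        have hmono := setIntegral_mono_set hfi0 hfnn0 hsub2.eventuallyLE
        linarith
      have hlim : Tendsto (fun s => |GG (ψ s) - GG (ψ r)|) atTop
          (nhds |GG Real.pi - GG (ψ r)|) :=
        ((((GG_continuous.tendsto Real.pi).comp hinf)).sub tendsto_const_nhds).abs
      rw [GG_pi] at hlim
      have h3 : |2 - GG (ψ r)| ≤ 1/2 * E := by
        refine le_of_tendsto hlim ?_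
        filter_upwards [eventually_gt_atTop r] with s hs using hev s hs
      rw [abs_sub_comm] at h3
      exact h3
    have hsmall : ∀ r ∈ Ioi r₀, |ψ r - Real.pi| ≤ Real.pi / 2 := by
      intro r hr
      by_contra hcon
      push_neg at hcon
      have hGb := hbound r hr
      have hE1 : 1/2 * E < 1 := by rw [hEdef]; linarith
      rcases le_or_gt 0 (ψ r - Real.pi) with h1 | h1
      · rw [abs_of_nonneg h1] at hcon
        have h2 : (3:ℝ) ≤ GG (ψ r) := GG_three_pi_div_two ▸ GG_mono (by linarith)
        have h3 := le_abs_self (GG (ψ r) - 2)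
        linarith
      · rw [abs_of_neg h1] at hcon
        have h2 : GG (ψ r) ≤ GG (Real.pi / 2) := GG_mono (by linarith)
        rw [GG_pi_div_two] at h2
        have h3 := neg_le_abs (GG (ψ r) - 2)
        linarith
    have hsub : Ioi r₀ ⊆ Ioi (0:ℝ) := Ioi_subset_Ioi hr₀.le
    have hgc : ContinuousOn (fun r => (deriv ψ r ^ 2 + (ψ r - Real.pi) ^ 2 / r ^ 2) * r)
        (Ioi r₀) :=
      (((hdc.mono hsub).pow 2).add (((((hψc.mono hsub)).sub continuousOn_const).pow 2).div
        ((continuous_pow 2).continuousOn)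
        (fun r hr => pow_ne_zero 2 (ne_of_gt (hsub hr))))).mul continuousOn_id
    have hle : ∀ r ∈ Ioi r₀, (deriv ψ r ^ 2 + (ψ r - Real.pi) ^ 2 / r ^ 2) * r ≤
        Real.pi ^ 2 / 4 * ((deriv ψ r ^ 2 + Real.sin (ψ r) ^ 2 / r ^ 2) * r) := by
      intro r hr
      have hr0 : (0:ℝ) < r := lt_trans hr₀ hr
      have h1 : (ψ r - Real.pi) ^ 2 ≤ Real.pi ^ 2 / 4 * Real.sin (ψ r - Real.pi) ^ 2 :=
        sq_le_sq_sin (hsmall r hr)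
      rw [Real.sin_sub_pi, neg_sq] at h1
      have hd : deriv ψ r ^ 2 ≤ Real.pi ^ 2 / 4 * deriv ψ r ^ 2 :=
        le_mul_of_one_le_left (sq_nonneg _) hpi4
      have h2 : (ψ r - Real.pi) ^ 2 / r ^ 2
          ≤ (Real.pi ^ 2 / 4 * Real.sin (ψ r) ^ 2) / r ^ 2 :=
        (div_le_div_iff_of_pos_right (by positivity)).mpr h1
      calc (deriv ψ r ^ 2 + (ψ r - Real.pi) ^ 2 / r ^ 2) * r
          ≤ (Real.pi ^ 2 / 4 * deriv ψ r ^ 2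
              + (Real.pi ^ 2 / 4 * Real.sin (ψ r) ^ 2) / r ^ 2) * r := by
            apply mul_le_mul_of_nonneg_right _ hr0.le
            linarith
        _ = Real.pi ^ 2 / 4 * ((deriv ψ r ^ 2 + Real.sin (ψ r) ^ 2 / r ^ 2) * r) := by ring
    exact conclude measurableSet_Ioi hfi0 (hgc.aestronglyMeasurable measurableSet_Ioi)
      (fun r hr => by have hr0 : (0:ℝ) < r := lt_trans hr₀ hr; positivity) hle
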